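/- arXiv:0908.1027 — 3 statements merged into one kernel-verified Lean document; each statement's English description precedes it below -/
import Mathlib

section
/- Let q be a prime power, ψ a nontrivial additive character of F_q, g ∈ F_q^× an element of multiplicative order s, and a ∈ F_q^×. Then |Σ_{x=0}^{s-1} ψ(a·g^x)| ≤ √q. -/
open Finset Subgroup

/-- Gauss-sum bound (Lidl–Niederreiter Thm 8.78): for a nontrivial additive character `ψ`
of `F_q`, `g ∈ F_q^×` of multiplicative order `s` and `a ∈ F_q^×`,
`|Σ_{x=0}^{s-1} ψ(a·g^x)| ≤ √q`. -/
theorem stmt_1 {F : Type*} [Field F] [Fintype F] (ψ : AddChar F ℂ)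
    (hψ : ∃ u : F, ψ u ≠ 1) (a g : Fˣ) (s : ℕ) (hs : orderOf g = s) :
    ‖∑ x ∈ Finset.range s, ψ ((a : F) * (g : F) ^ x)‖ ≤
      Real.sqrt (Fintype.card F) := by
  classical
  have hψ1 : ψ ≠ 1 := by
    obtain ⟨u, hu⟩ := hψ
    intro h; exact hu (by simp [h])
  have hprim : ψ.IsPrimitive := AddChar.IsPrimitive.of_ne_one hψ1
  have hchar : 0 < ringChar F := (CharP.char_is_prime F (ringChar F)).pos
  set H := Subgroup.zpowers g with hH
  set S : F → ℂ := fun b => ∑ h : H, ψ (b * ((h : Fˣ) : F)) with hS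
  have hfin : IsOfFinOrder g := isOfFinOrder_of_finite g
  have hcardH : Fintype.card H = s := hs ▸ Fintype.card_zpowers
  -- rewrite the range sum as a sum over the subgroup
  have key : ∀ b : F, ∑ x ∈ Finset.range s, ψ (b * (g : F) ^ x) = S b := by
    intro b
    subst hs
    rw [Finset.sum_range fun x => ψ (b * (g : F) ^ x)]
    exact (Fintype.sum_equiv (finEquivZPowers hfin)
      (fun n => ψ (b * (g : F) ^ (n : ℕ)))
      (fun h => ψ (b * ((h : Fˣ) : F)))
      (fun n => by rw [finEquivZPowers_apply]; norm_cast))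
  -- invariance of S under multiplication by elements of H
  have inv : ∀ (b : F) (h0 : H), S (b * ((h0 : Fˣ) : F)) = S b := by
    intro b h0
    simp only [hS]
    refine Fintype.sum_equiv (Equiv.mulLeft h0) _ _ fun h => ?_
    simp only [Equiv.coe_mulLeft]
    push_cast
    ring_nf
  have conj_apply : ∀ u : F, (starRingEnd ℂ) (ψ u) = ψ (-u) := by
    intro u
    rw [AddChar.starComp_apply hchar, AddChar.inv_apply]
  -- total second moment
  have total : ∑ b : F, Complex.normSq (S b) = (Fintype.card F : ℝ) * s := by
    have hC : ∑ b : F, (Complex.normSq (S b) : ℂ) = (Fintype.card F : ℂ) * s := by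
      have e1 : ∀ b : F, (Complex.normSq (S b) : ℂ)
          = ∑ h : H, ∑ h' : H, ψ (b * (((h' : Fˣ) : F) - ((h : Fˣ) : F))) := by
        intro b
        rw [← Complex.mul_conj]
        simp only [hS, map_sum, Finset.sum_mul, Finset.mul_sum]
        refine Finset.sum_congr rfl fun h _ => Finset.sum_congr rfl fun h' _ => ?_
        rw [conj_apply, ← AddChar.map_add_eq_mul]
        congr 1
        ring
      simp_rw [e1]
      have swap : ∑ b : F, ∑ h : H, ∑ h' : H, ψ (b * (((h' : Fˣ) : F) - ((h : Fˣ) : F)))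
          = ∑ h : H, ∑ h' : H, ∑ b : F, ψ (b * (((h' : Fˣ) : F) - ((h : Fˣ) : F))) := by
        rw [Finset.sum_comm]
        exact Finset.sum_congr rfl fun h _ => Finset.sum_comm
      rw [swap]
      have e2 : ∀ h h' : H, ∑ b : F, ψ (b * (((h' : Fˣ) : F) - ((h : Fˣ) : F)))
          = if h = h' then (Fintype.card F : ℂ) else 0 := by
        intro h h'
        rw [AddChar.sum_mulShift _ hprim]
        by_cases hhh : h = h'
        · simp [hhh]
        · rw [if_neg (fun h0 => hhh ((Subtype.ext (Units.ext (sub_eq_zero.mp h0))).symm)), if_neg hhh]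
          simp
      simp_rw [e2]
      simp [hcardH, mul_comm]
    have := congrArg Complex.re hC
    simpa using this
  -- compare s * normSq (S a) with the total
  have hinj : Function.Injective (fun h0 : H => (a : F) * ((h0 : Fˣ) : F)) := by
    intro x y hxy
    simp only at hxy
    exact Subtype.ext (Units.ext (mul_left_cancel₀ (Units.ne_zero a) hxy))
  have hle : (s : ℝ) * Complex.normSq (S (a : F)) ≤ ∑ b : F, Complex.normSq (S b) := by
    calc (s : ℝ) * Complex.normSq (S (a : F))
        = ∑ h0 : H, Complex.normSq (S ((a : F) * ((h0 : Fˣ) : F))) := by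
          simp [inv, hcardH, mul_comm]
      _ = ∑ b ∈ Finset.univ.image (fun h0 : H => (a : F) * ((h0 : Fˣ) : F)),
            Complex.normSq (S b) := by
          rw [Finset.sum_image (fun x _ y _ h => hinj h)]
      _ ≤ ∑ b : F, Complex.normSq (S b) := by
          refine Finset.sum_le_sum_of_subset_of_nonneg (Finset.subset_univ _)
            (fun b _ _ => Complex.normSq_nonneg _)
  rw [total] at hle
  have hs0 : 0 < s := hs ▸ orderOf_pos g
  have hnorm : Complex.normSq (S (a : F)) ≤ (Fintype.card F : ℝ) := by
    have := le_of_mul_le_mul_left (by linarith [hle] : (s : ℝ) * Complex.normSq (S (a : F)) ≤ (s : ℝ) * (Fintype.card F : ℝ)) (by exact_mod_cast hs0 : (0:ℝ) < s)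
    exact this
  rw [key]
  rw [Complex.norm_def]
  exact Real.sqrt_le_sqrt hnorm
end

section
/- With the notation of the exponential polynomial f_b(x₁,x₂,x₃) = a₁g₁^{x₁} + a₂g₂^{x₂} + a₃g₃^{x₃} − b over F_q, define for each b ∈ F_q the error term Δ_b(r) = N_{f_b}(r) − s₁s₂r/q, where s_i is the order of g_i and N_{f_b}(r) counts solutions with x₁ ∈ {0,…,s₁−1}, x₂ ∈ {0,…,s₂−1}, x₃ ∈ {0,…,r−1}. Then Σ_{b ∈ F_q} |Δ_b(r)|² ≤ q² r. -/
open Finset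

section Aux
variable {F : Type*} [Field F] [Fintype F] [DecidableEq F]

private lemma sum_shift_one {M : Type*} [AddCancelCommMonoid M] (f : ℕ → M) (s : ℕ)
    (hf : ∀ x, f (x + s) = f x) : ∑ x ∈ range s, f (x + 1) = ∑ x ∈ range s, f x := by
  have h1 := Finset.sum_range_succ' f s
  have h2 := Finset.sum_range_succ f s
  have h3 : f s = f 0 := by simpa using hf 0
  rw [h2, h3] at h1
  exact add_right_cancel h1.symm

private lemma sum_shift {M : Type*} [AddCancelCommMonoid M] (f : ℕ → M) (s : ℕ)
    (hf : ∀ x, f (x + s) = f x) (k : ℕ) :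
    ∑ x ∈ range s, f (x + k) = ∑ x ∈ range s, f x := by
  induction k with
  | zero => simp
  | succ k ih =>
    have step : ∑ x ∈ range s, f (x + (k + 1)) = ∑ x ∈ range s, f (x + k) := by
      have := sum_shift_one (fun y => f (y + k)) s (fun x => by
        simpa [show x + k + s = x + s + k by omega] using hf (x + k))
      simpa [show ∀ x, x + 1 + k = x + (k+1) from fun x => by omega] using this
    rw [step, ih]

private noncomputable def Tψ {F : Type*} [Field F] (ψ : AddChar F ℂ) (c g : F) (n : ℕ) : ℂ :=
  ∑ x ∈ range n, ψ (c * g ^ x)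

private lemma parseval (ψ : AddChar F ℂ) (hψ : ψ.IsPrimitive) (g : Fˣ) (n : ℕ)
    (hn : n ≤ orderOf g) :
    ∑ c : F, Complex.normSq (Tψ ψ c (g : F) n) = (Fintype.card F : ℝ) * n := by
  have key : ∑ c : F, (Tψ ψ c (g : F) n * (starRingEnd ℂ) (Tψ ψ c (g : F) n))
      = (Fintype.card F : ℂ) * n := by
    have expand : ∀ c : F, Tψ ψ c (g : F) n * (starRingEnd ℂ) (Tψ ψ c (g : F) n)
        = ∑ x ∈ range n, ∑ y ∈ range n, ψ (c * ((g : F) ^ x - (g : F) ^ y)) := by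
      intro c
      rw [Tψ, map_sum, Finset.sum_mul_sum]
      refine Finset.sum_congr rfl fun x _ => Finset.sum_congr rfl fun y _ => ?_
      rw [← AddChar.map_neg_eq_conj, ← AddChar.map_add_eq_mul]
      ring_nf
    calc ∑ c : F, (Tψ ψ c (g : F) n * (starRingEnd ℂ) (Tψ ψ c (g : F) n))
        = ∑ x ∈ range n, ∑ y ∈ range n, ∑ c : F, ψ (c * ((g : F) ^ x - (g : F) ^ y)) := by
          simp_rw [expand]
          rw [Finset.sum_comm]
          exact Finset.sum_congr rfl fun x _ => Finset.sum_comm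
      _ = ∑ x ∈ range n, ∑ y ∈ range n,
            (if ((g : F) ^ x - (g : F) ^ y) = 0 then (Fintype.card F : ℂ) else 0) := by
          refine Finset.sum_congr rfl fun x _ => Finset.sum_congr rfl fun y _ => ?_
          rw [AddChar.sum_mulShift _ hψ]
          split_ifs <;> simp
      _ = ∑ x ∈ range n, ∑ y ∈ range n, (if y = x then (Fintype.card F : ℂ) else 0) := by
          refine Finset.sum_congr rfl fun x hx => Finset.sum_congr rfl fun y hy => ?_
          congr 1
          simp only [sub_eq_zero, eq_iff_iff]
          constructor
          · intro h
            have hxy : g ^ x = g ^ y := Units.ext (by exact_mod_cast h)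
            exact (pow_injOn_Iio_orderOf (lt_of_lt_of_le (mem_range.mp hy) hn)
              (lt_of_lt_of_le (mem_range.mp hx) hn) hxy.symm)
          · rintro rfl; rfl
      _ = ∑ x ∈ range n, (Fintype.card F : ℂ) := by
          refine Finset.sum_congr rfl fun x hx => ?_
          rw [Finset.sum_ite_eq' (range n) x (fun _ => (Fintype.card F : ℂ))]
          simp [hx]
      _ = (Fintype.card F : ℂ) * n := by
          rw [Finset.sum_const, card_range, nsmul_eq_mul, mul_comm]
  have cast : ((∑ c : F, Complex.normSq (Tψ ψ c (g : F) n) : ℝ) : ℂ)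
      = ((Fintype.card F : ℝ) * n : ℝ) := by
    push_cast
    simp_rw [← Complex.mul_conj]
    exact_mod_cast key
  exact_mod_cast cast

private lemma T_bound (ψ : AddChar F ℂ) (hψ : ψ.IsPrimitive) (g : Fˣ) {c : F} (hc : c ≠ 0) :
    Complex.normSq (Tψ ψ c (g : F) (orderOf g)) ≤ (Fintype.card F : ℝ) := by
  set s := orderOf g with hs
  have hspos : 0 < s := orderOf_pos g
  have gpow : ((g : F)) ^ s = 1 := by
    have h := congrArg (Units.val) (pow_orderOf_eq_one g)
    rw [Units.val_pow_eq_pow_val] at h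
    simpa using h
  have shift : ∀ k : ℕ, Tψ ψ (c * (g : F) ^ k) (g : F) s = Tψ ψ c (g : F) s := by
    intro k
    rw [Tψ, Tψ]
    have per : ∀ x, ψ (c * (g : F) ^ (x + s)) = ψ (c * (g : F) ^ x) := by
      intro x; rw [pow_add, gpow, mul_one]
    calc ∑ x ∈ range s, ψ (c * (g:F) ^ k * (g:F) ^ x)
        = ∑ x ∈ range s, ψ (c * (g:F) ^ (x + k)) := by
          refine Finset.sum_congr rfl fun x _ => ?_
          rw [pow_add]; ring_nf
      _ = ∑ x ∈ range s, ψ (c * (g:F) ^ x) := sum_shift (fun x => ψ (c * (g:F) ^ x)) s per k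
  have inj : Set.InjOn (fun k => c * (g : F) ^ k) (range s : Set ℕ) := by
    intro k hk l hl h
    have h2 : (g : F) ^ k = (g : F) ^ l := mul_left_cancel₀ hc h
    have h3 : g ^ k = g ^ l := Units.ext (by exact_mod_cast h2)
    exact pow_injOn_Iio_orderOf (by simpa using hk) (by simpa using hl) h3
  have key : (s : ℝ) * Complex.normSq (Tψ ψ c (g : F) s)
      = ∑ c' ∈ (range s).image (fun k => c * (g : F) ^ k),
          Complex.normSq (Tψ ψ c' (g : F) s) := by
    rw [Finset.sum_image (fun x hx y hy h => inj hx hy h)]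
    simp [shift, Finset.sum_const, card_range, nsmul_eq_mul]
  have hle : ∑ c' ∈ (range s).image (fun k => c * (g : F) ^ k),
      Complex.normSq (Tψ ψ c' (g : F) s) ≤ ∑ c' : F, Complex.normSq (Tψ ψ c' (g : F) s) :=
    Finset.sum_le_sum_of_subset_of_nonneg (Finset.subset_univ _)
      (fun _ _ _ => Complex.normSq_nonneg _)
  have main : (s : ℝ) * Complex.normSq (Tψ ψ c (g : F) s) ≤ (s:ℝ) * (Fintype.card F : ℝ) := by
    rw [key]
    calc _ ≤ ∑ c' : F, Complex.normSq (Tψ ψ c' (g : F) s) := hle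
      _ = (Fintype.card F : ℝ) * s := parseval ψ hψ g s le_rfl
      _ = (s:ℝ) * (Fintype.card F : ℝ) := by ring
  exact le_of_mul_le_mul_left main (by exact_mod_cast hspos)

end Aux

/-- `Ncount a₁ a₂ a₃ g₁ g₂ g₃ s₁ s₂ r b` is the number of triples
`(x₁,x₂,x₃) ∈ {0,…,s₁-1} × {0,…,s₂-1} × {0,…,r-1}` with
`a₁g₁^{x₁} + a₂g₂^{x₂} + a₃g₃^{x₃} = b`. -/
def Ncount {F : Type*} [Field F] [Fintype F] [DecidableEq F]
    (a₁ a₂ a₃ g₁ g₂ g₃ : F) (s₁ s₂ r : ℕ) (b : F) : ℕ :=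
  ((range s₁ ×ˢ range s₂ ×ˢ range r).filter
    (fun x => a₁ * g₁ ^ x.1 + a₂ * g₂ ^ x.2.1 + a₃ * g₃ ^ x.2.2 = b)).card

/-- Second moment bound: with `Δ_b(r) = N_{f_b}(r) − s₁s₂r/q`, one has
`Σ_{b ∈ F_q} |Δ_b(r)|² ≤ q²·r`. -/
theorem stmt_3 {F : Type*} [Field F] [Fintype F] [DecidableEq F]
    (a₁ a₂ a₃ g₁ g₂ g₃ : Fˣ) (r : ℕ) (hr : 1 ≤ r) (hr3 : r ≤ orderOf g₃) :
    ∑ b : F, |(Ncount (a₁ : F) a₂ a₃ g₁ g₂ g₃ (orderOf g₁) (orderOf g₂) r b : ℝ) -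
        (orderOf g₁ : ℝ) * (orderOf g₂ : ℝ) * r / (Fintype.card F : ℝ)| ^ 2 ≤
      (Fintype.card F : ℝ) ^ 2 * r := by
  have hψp := AddChar.FiniteField.primitiveChar_to_Complex_isPrimitive F
  set ψ := AddChar.FiniteField.primitiveChar_to_Complex F with hψdef
  set q := Fintype.card F with hqdef
  have hq0 : 0 < q := Fintype.card_pos
  have hqR : (0:ℝ) < q := by exact_mod_cast hq0
  set s₁ := orderOf g₁ with hs₁
  set s₂ := orderOf g₂ with hs₂
  set X : Finset (ℕ × ℕ × ℕ) := range s₁ ×ˢ range s₂ ×ˢ range r with hX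
  set f : ℕ × ℕ × ℕ → F := fun x =>
    (a₁:F) * (g₁:F) ^ x.1 + (a₂:F) * (g₂:F) ^ x.2.1 + (a₃:F) * (g₃:F) ^ x.2.2 with hf
  set S : F → ℂ := fun μ =>
    Tψ ψ (μ * a₁) (g₁:F) s₁ * Tψ ψ (μ * a₂) (g₂:F) s₂ * Tψ ψ (μ * a₃) (g₃:F) r with hS
  set N : F → ℕ := fun b => Ncount (a₁:F) a₂ a₃ g₁ g₂ g₃ s₁ s₂ r b with hNdef
  -- factorization of the complete exponential sum
  have hfact : ∀ μ : F, ∑ x ∈ X, ψ (μ * f x) = S μ := by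
    intro μ
    calc ∑ x ∈ X, ψ (μ * f x)
        = ∑ x₁ ∈ range s₁, ∑ x₂ ∈ range s₂, ∑ x₃ ∈ range r,
            ψ ((μ*a₁) * (g₁:F)^x₁) * ψ ((μ*a₂) * (g₂:F)^x₂) * ψ ((μ*a₃) * (g₃:F)^x₃) := by
          rw [hX, Finset.sum_product]
          refine Finset.sum_congr rfl fun x₁ _ => ?_
          rw [Finset.sum_product]
          refine Finset.sum_congr rfl fun x₂ _ => Finset.sum_congr rfl fun x₃ _ => ?_
          rw [← AddChar.map_add_eq_mul, ← AddChar.map_add_eq_mul]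
          congr 1
          simp only [hf]
          ring
      _ = S μ := by
          simp only [hS, Tψ, Finset.sum_mul, Finset.mul_sum]
          refine (Finset.sum_congr rfl fun _ _ => Finset.sum_comm).trans ?_
          rw [Finset.sum_comm]
          exact Finset.sum_congr rfl fun _ _ => Finset.sum_comm
  -- Fourier identity for the counting function
  have hNform : ∀ b : F, ∑ μ : F, ψ (μ * (-b)) * S μ = (q:ℂ) * (N b : ℕ) := by
    intro b
    calc ∑ μ : F, ψ (μ * (-b)) * S μ
        = ∑ μ : F, ∑ x ∈ X, ψ (μ * (f x - b)) := by
          refine Finset.sum_congr rfl fun μ _ => ?_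
          rw [← hfact μ, Finset.mul_sum]
          refine Finset.sum_congr rfl fun x _ => ?_
          rw [← AddChar.map_add_eq_mul]
          congr 1
          ring
      _ = ∑ x ∈ X, ∑ μ : F, ψ (μ * (f x - b)) := Finset.sum_comm
      _ = ∑ x ∈ X, (if f x - b = 0 then (q:ℂ) else 0) := by
          refine Finset.sum_congr rfl fun x _ => ?_
          rw [AddChar.sum_mulShift _ hψp]
          split_ifs <;> simp [hqdef]
      _ = ∑ x ∈ X, (if f x = b then (q:ℂ) else 0) := by
          simp_rw [sub_eq_zero]
      _ = (q:ℂ) * (N b : ℕ) := by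
          rw [← Finset.sum_filter, Finset.sum_const, nsmul_eq_mul, mul_comm]
          congr 2
  set e : Finset F := univ.erase 0 with he
  have hS0 : S 0 = (s₁ : ℂ) * s₂ * r := by
    simp [hS, Tψ]
  have hEb : ∀ b : F, ∑ μ ∈ e, ψ (μ * (-b)) * S μ = (q:ℂ) * (N b : ℕ) - (s₁:ℂ) * s₂ * r := by
    intro b
    have h := hNform b
    rw [← Finset.sum_erase_add univ _ (mem_univ (0:F))] at h
    have h0 : ψ ((0:F) * (-b)) * S 0 = (s₁:ℂ) * s₂ * r := by
      rw [zero_mul, AddChar.map_zero_eq_one, one_mul, hS0]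
    rw [he]
    rw [h0] at h
    linear_combination h
  -- second moment identity
  have h2 : ∑ b : F, ((q:ℂ) * (N b : ℕ) - (s₁:ℂ)*s₂*r) *
        (starRingEnd ℂ) ((q:ℂ) * (N b : ℕ) - (s₁:ℂ)*s₂*r)
      = (q:ℂ) * ∑ μ ∈ e, S μ * (starRingEnd ℂ) (S μ) := by
    calc ∑ b : F, ((q:ℂ) * (N b : ℕ) - (s₁:ℂ)*s₂*r) *
          (starRingEnd ℂ) ((q:ℂ) * (N b : ℕ) - (s₁:ℂ)*s₂*r)
        = ∑ b : F, (∑ μ ∈ e, ψ (μ * (-b)) * S μ) *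
            (starRingEnd ℂ) (∑ ν ∈ e, ψ (ν * (-b)) * S ν) := by
          exact Finset.sum_congr rfl fun b _ => by rw [hEb b]
      _ = ∑ b : F, ∑ μ ∈ e, ∑ ν ∈ e,
            (S μ * (starRingEnd ℂ) (S ν)) * ψ (b * (ν - μ)) := by
          refine Finset.sum_congr rfl fun b _ => ?_
          rw [map_sum, Finset.sum_mul_sum]
          refine Finset.sum_congr rfl fun μ _ => Finset.sum_congr rfl fun ν _ => ?_
          rw [map_mul (starRingEnd ℂ) (ψ (ν * -b)) (S ν), ← AddChar.map_neg_eq_conj ψ (ν * -b)]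
          have h3 : ψ (μ * -b) * ψ (-(ν * -b)) = ψ (b * (ν - μ)) := by
            rw [← AddChar.map_add_eq_mul]; congr 1; ring
          calc (ψ (μ * -b) * S μ) * (ψ (-(ν * -b)) * (starRingEnd ℂ) (S ν))
              = (ψ (μ * -b) * ψ (-(ν * -b))) * (S μ * (starRingEnd ℂ) (S ν)) := by ring
            _ = (S μ * (starRingEnd ℂ) (S ν)) * ψ (b * (ν - μ)) := by rw [h3]; ring
      _ = ∑ μ ∈ e, ∑ ν ∈ e, (S μ * (starRingEnd ℂ) (S ν)) * ∑ b : F, ψ (b * (ν - μ)) := by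
          rw [Finset.sum_comm]
          refine Finset.sum_congr rfl fun μ _ => ?_
          rw [Finset.sum_comm]
          exact Finset.sum_congr rfl fun ν _ => (Finset.mul_sum _ _ _).symm
      _ = ∑ μ ∈ e, ∑ ν ∈ e, (S μ * (starRingEnd ℂ) (S ν)) *
            (if ν - μ = 0 then (q:ℂ) else 0) := by
          refine Finset.sum_congr rfl fun μ _ => Finset.sum_congr rfl fun ν _ => ?_
          rw [AddChar.sum_mulShift _ hψp]
          split_ifs <;> simp [hqdef]
      _ = ∑ μ ∈ e, (S μ * (starRingEnd ℂ) (S μ)) * (q:ℂ) := by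
          refine Finset.sum_congr rfl fun μ hμ => ?_
          simp_rw [sub_eq_zero, mul_ite, mul_zero]
          rw [Finset.sum_ite_eq' e μ (fun ν => S μ * (starRingEnd ℂ) (S ν) * (q:ℂ))]
          simp [hμ]
      _ = (q:ℂ) * ∑ μ ∈ e, S μ * (starRingEnd ℂ) (S μ) := by
          rw [Finset.mul_sum]
          exact Finset.sum_congr rfl fun _ _ => by ring
  have h2' : ∑ b : F, Complex.normSq ((q:ℂ) * (N b : ℕ) - (s₁:ℂ)*s₂*r)
      = (q:ℝ) * ∑ μ ∈ e, Complex.normSq (S μ) := by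
    have h := h2
    simp_rw [Complex.mul_conj] at h
    exact_mod_cast h
  have hD : ∀ b : F, Complex.normSq ((q:ℂ) * (N b : ℕ) - (s₁:ℂ)*s₂*r)
      = (q:ℝ)^2 * |((N b : ℝ) - (s₁:ℝ)*s₂*r/(q:ℝ))| ^ 2 := by
    intro b
    have hcast : ((q:ℂ) * (N b : ℕ) - (s₁:ℂ)*s₂*r)
        = ((((q:ℝ) * ((N b : ℝ) - (s₁:ℝ)*s₂*r/(q:ℝ))) : ℝ) : ℂ) := by
      have hqc : ((q:ℕ):ℂ) ≠ 0 := by exact_mod_cast hqR.ne'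
      push_cast
      field_simp [hqc]
    rw [hcast, Complex.normSq_ofReal, sq_abs]
    ring
  have hSbound : ∀ μ ∈ e, Complex.normSq (S μ)
      ≤ (q:ℝ) * q * Complex.normSq (Tψ ψ (μ * a₃) (g₃:F) r) := by
    intro μ hμ
    have hμ0 : μ ≠ 0 := (Finset.mem_erase.mp hμ).1
    rw [hS]
    simp only [Complex.normSq_mul]
    have hb1 := T_bound ψ hψp g₁ (mul_ne_zero hμ0 (Units.ne_zero a₁))
    have hb2 := T_bound ψ hψp g₂ (mul_ne_zero hμ0 (Units.ne_zero a₂))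
    have h3 : (0:ℝ) ≤ Complex.normSq (Tψ ψ (μ * a₃) (g₃:F) r) := Complex.normSq_nonneg _
    gcongr
    exact Complex.normSq_nonneg _
  have hT3sum : ∑ μ : F, Complex.normSq (Tψ ψ (μ * a₃) (g₃:F) r) = (q:ℝ) * r := by
    rw [← parseval ψ hψp g₃ r hr3]
    exact Fintype.sum_bijective (fun μ => μ * (a₃:F))
      (Equiv.mulRight₀ (a₃:F) (Units.ne_zero a₃)).bijective _ _ (fun μ => rfl)
  have final : (q:ℝ)^2 * (∑ b : F, |((N b : ℝ) - (s₁:ℝ)*s₂*r/(q:ℝ))| ^ 2)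
      ≤ (q:ℝ)^2 * ((q:ℝ)^2 * r) := by
    calc (q:ℝ)^2 * (∑ b : F, |((N b : ℝ) - (s₁:ℝ)*s₂*r/(q:ℝ))| ^ 2)
        = ∑ b : F, (q:ℝ)^2 * |((N b : ℝ) - (s₁:ℝ)*s₂*r/(q:ℝ))| ^ 2 := Finset.mul_sum _ _ _
      _ = ∑ b : F, Complex.normSq ((q:ℂ) * (N b : ℕ) - (s₁:ℂ)*s₂*r) :=
          Finset.sum_congr rfl fun b _ => (hD b).symm
      _ = (q:ℝ) * ∑ μ ∈ e, Complex.normSq (S μ) := h2'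
      _ ≤ (q:ℝ) * ∑ μ ∈ e, ((q:ℝ) * q * Complex.normSq (Tψ ψ (μ * a₃) (g₃:F) r)) :=
          mul_le_mul_of_nonneg_left (Finset.sum_le_sum hSbound) hqR.le
      _ = (q:ℝ)*q*q * ∑ μ ∈ e, Complex.normSq (Tψ ψ (μ * a₃) (g₃:F) r) := by
          rw [Finset.mul_sum, Finset.mul_sum]
          exact Finset.sum_congr rfl fun _ _ => by ring
      _ ≤ (q:ℝ)*q*q * ∑ μ : F, Complex.normSq (Tψ ψ (μ * a₃) (g₃:F) r) := by
          refine mul_le_mul_of_nonneg_left ?_ (by positivity)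
          exact Finset.sum_le_sum_of_subset_of_nonneg (Finset.subset_univ _)
            (fun _ _ _ => Complex.normSq_nonneg _)
      _ = (q:ℝ)*q*q * ((q:ℝ) * r) := by rw [hT3sum]
      _ = (q:ℝ)^2 * ((q:ℝ)^2 * r) := by ring
  have := le_of_mul_le_mul_left final (by positivity : (0:ℝ) < (q:ℝ)^2)
  exact this
end

section
/- Let q be a prime power, ψ a nontrivial additive character of F_q, and a₁,a₂,a₃ ∈ F_q^×, g₁,g₂,g₃ ∈ F_q^× with orders s₁,s₂,s₃, and 1 ≤ r ≤ s₃. Then (1/q)·Σ_{μ ∈ F_q^×} |Σ_{x₁=0}^{s₁−1} ψ(a₁μg₁^{x₁})|² · |Σ_{x₂=0}^{s₂−1} ψ(a₂μg₂^{x₂})|² · |Σ_{x₃=0}^{r−1} ψ(a₃μg₃^{x₃})|² ≤ q²·r. -/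
open Finset

private lemma conj_psi {F : Type*} [Field F] [Fintype F] (ψ : AddChar F ℂ) (t : F) :
    (starRingEnd ℂ) (ψ t) = ψ (-t) := by
  rw [AddChar.starComp_apply (Nat.pos_of_ne_zero (CharP.ringChar_ne_zero_of_finite F)),
    AddChar.inv_apply]

/-- Mean square identity: `∑_{μ∈F} |∑_{x<n} ψ(μ g^x)|² = q·n` for `n ≤ orderOf g`. -/
private lemma meansq {F : Type*} [Field F] [Fintype F] [DecidableEq F] {ψ : AddChar F ℂ}
    (hψ : ψ.IsPrimitive) (g : Fˣ) {n : ℕ} (hn : n ≤ orderOf g) :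
    ∑ μ : F, ‖∑ x ∈ range n, ψ (μ * (g : F) ^ x)‖ ^ 2
      = (Fintype.card F : ℝ) * n := by
  classical
  have key : ∑ μ : F, ((∑ x ∈ range n, ψ (μ * (g : F) ^ x)) *
      (starRingEnd ℂ) (∑ x ∈ range n, ψ (μ * (g : F) ^ x)))
      = ((Fintype.card F : ℂ) * n) := by
    have h1 : ∀ μ : F, (∑ x ∈ range n, ψ (μ * (g : F) ^ x)) *
        (starRingEnd ℂ) (∑ x ∈ range n, ψ (μ * (g : F) ^ x))
        = ∑ x ∈ range n, ∑ y ∈ range n, ψ (μ * ((g : F) ^ x - (g : F) ^ y)) := by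
      intro μ
      rw [map_sum, Finset.sum_mul_sum]
      refine Finset.sum_congr rfl fun x _ => Finset.sum_congr rfl fun y _ => ?_
      rw [conj_psi, ← AddChar.map_add_eq_mul]
      congr 1
      ring
    calc ∑ μ : F, ((∑ x ∈ range n, ψ (μ * (g : F) ^ x)) *
            (starRingEnd ℂ) (∑ x ∈ range n, ψ (μ * (g : F) ^ x)))
        = ∑ μ : F, ∑ x ∈ range n, ∑ y ∈ range n, ψ (μ * ((g : F) ^ x - (g : F) ^ y)) :=
          Finset.sum_congr rfl fun μ _ => h1 μ
      _ = ∑ x ∈ range n, ∑ μ : F, ∑ y ∈ range n, ψ (μ * ((g : F) ^ x - (g : F) ^ y)) := by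
          exact Finset.sum_comm
      _ = ∑ x ∈ range n, ∑ y ∈ range n, ∑ μ : F, ψ (μ * ((g : F) ^ x - (g : F) ^ y)) := by
          exact Finset.sum_congr rfl fun x _ => Finset.sum_comm
      _ = ∑ x ∈ range n, ∑ y ∈ range n,
            (if ((g : F) ^ x - (g : F) ^ y) = 0 then (Fintype.card F : ℂ) else 0) :=
          Finset.sum_congr rfl fun x _ => Finset.sum_congr rfl fun y _ => by
            rw [AddChar.sum_mulShift _ hψ, Nat.cast_ite, Nat.cast_zero]
      _ = ∑ x ∈ range n, ∑ y ∈ range n, (if x = y then (Fintype.card F : ℂ) else 0) := by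
          refine Finset.sum_congr rfl fun x hx => Finset.sum_congr rfl fun y hy => ?_
          refine if_congr ?_ rfl rfl
          rw [sub_eq_zero]
          constructor
          · intro h
            have hgx : (g : F) ^ x = ((g ^ x : Fˣ) : F) := by push_cast; rfl
            have hgy : (g : F) ^ y = ((g ^ y : Fˣ) : F) := by push_cast; rfl
            have : (g ^ x : Fˣ) = g ^ y := Units.ext (by rw [← hgx, ← hgy, h])
            exact pow_injOn_Iio_orderOf (lt_of_lt_of_le (mem_range.mp hx) hn)
              (lt_of_lt_of_le (mem_range.mp hy) hn) this
          · intro h; rw [h]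
      _ = ∑ x ∈ range n, (Fintype.card F : ℂ) := by
          refine Finset.sum_congr rfl fun x hx => ?_
          rw [Finset.sum_ite_eq _ x (fun _ => (Fintype.card F : ℂ)), if_pos hx]
      _ = (Fintype.card F : ℂ) * n := by
          rw [Finset.sum_const, card_range, nsmul_eq_mul, mul_comm]
  have h2 : ∀ μ : F, ‖∑ x ∈ range n, ψ (μ * (g : F) ^ x)‖ ^ 2
      = ((∑ x ∈ range n, ψ (μ * (g : F) ^ x)) *
        (starRingEnd ℂ) (∑ x ∈ range n, ψ (μ * (g : F) ^ x))).re := by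
    intro μ
    rw [Complex.mul_conj, Complex.sq_norm]
    simp
  calc ∑ μ : F, ‖∑ x ∈ range n, ψ (μ * (g : F) ^ x)‖ ^ 2
      = (∑ μ : F, ((∑ x ∈ range n, ψ (μ * (g : F) ^ x)) *
          (starRingEnd ℂ) (∑ x ∈ range n, ψ (μ * (g : F) ^ x)))).re := by
        rw [Complex.re_sum]
        exact Finset.sum_congr rfl fun μ _ => h2 μ
    _ = (Fintype.card F : ℝ) * n := by rw [key]; simp

/-- Pointwise bound: `|∑_{x<orderOf g} ψ(b g^x)|² ≤ q` for `b ≠ 0`. -/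
private lemma ptbound {F : Type*} [Field F] [Fintype F] [DecidableEq F] {ψ : AddChar F ℂ}
    (hψ : ψ.IsPrimitive) (g : Fˣ) {b : F} (hb : b ≠ 0) :
    ‖∑ x ∈ range (orderOf g), ψ (b * (g : F) ^ x)‖ ^ 2 ≤ (Fintype.card F : ℝ) := by
  classical
  set s := orderOf g with hs_def
  have hs : 0 < s := orderOf_pos g
  haveI : NeZero s := ⟨hs.ne'⟩
  have horder : orderOf (g : F) = s := orderOf_units
  -- invariance under multiplication by g
  have hinv : ∀ c : F, (∑ x ∈ range s, ψ (c * (g : F) * (g : F) ^ x))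
      = ∑ x ∈ range s, ψ (c * (g : F) ^ x) := by
    intro c
    have step1 : ∑ x ∈ range s, ψ (c * (g : F) * (g : F) ^ x)
        = ∑ x ∈ range s, ψ (c * (g : F) ^ ((x + 1) % s)) := by
      refine Finset.sum_congr rfl fun x _ => ?_
      rw [← horder, pow_mod_orderOf]
      congr 1
      rw [pow_succ]
      ring
    rw [step1, ← Fin.sum_univ_eq_sum_range (fun x => ψ (c * (g : F) ^ ((x + 1) % s))) s,
      ← Fin.sum_univ_eq_sum_range (fun x => ψ (c * (g : F) ^ x)) s]
    have hval : ∀ i : Fin s, (((i + 1 : Fin s)) : ℕ) = ((i : ℕ) + 1) % s := by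
      intro i
      rw [Fin.add_def, Fin.val_one']
      conv_rhs => rw [Nat.add_mod, Nat.mod_eq_of_lt i.isLt]
    exact Fintype.sum_equiv (Equiv.addRight (1 : Fin s)) _ _ (fun i => by
      rw [show ((Equiv.addRight (1 : Fin s)) i) = i + 1 from rfl, hval i])
  have hinvk : ∀ (k : ℕ), (∑ x ∈ range s, ψ (b * (g : F) ^ k * (g : F) ^ x))
      = ∑ x ∈ range s, ψ (b * (g : F) ^ x) := by
    intro k
    induction k with
    | zero => simp
    | succ k ih =>
      have : ∀ x, b * (g : F) ^ (k + 1) * (g : F) ^ x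
          = (b * (g : F) ^ k) * (g : F) * (g : F) ^ x := by intro x; ring
      simp_rw [this]
      rw [hinv (b * (g : F) ^ k), ih]
  set T : F → ℝ := fun μ => ‖∑ x ∈ range s, ψ (μ * (g : F) ^ x)‖ ^ 2 with hT
  have hsmul : (s : ℝ) * T b = ∑ k ∈ range s, T (b * (g : F) ^ k) := by
    have : ∀ k ∈ range s, T (b * (g : F) ^ k) = T b := by
      intro k _
      simp only [hT]
      rw [hinvk k]
    rw [Finset.sum_congr rfl this, Finset.sum_const, card_range, nsmul_eq_mul]
  have hinj : ∀ x ∈ range s, ∀ y ∈ range s,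
      b * (g : F) ^ x = b * (g : F) ^ y → x = y := by
    intro x hx y hy h
    have h' : (g : F) ^ x = (g : F) ^ y := mul_left_cancel₀ hb h
    have hgx : (g : F) ^ x = ((g ^ x : Fˣ) : F) := by push_cast; rfl
    have hgy : (g : F) ^ y = ((g ^ y : Fˣ) : F) := by push_cast; rfl
    have : (g ^ x : Fˣ) = g ^ y := Units.ext (by rw [← hgx, ← hgy, h'])
    exact pow_injOn_Iio_orderOf (mem_range.mp hx) (mem_range.mp hy) this
  have himg : ∑ k ∈ range s, T (b * (g : F) ^ k)
      = ∑ μ ∈ (range s).image (fun k => b * (g : F) ^ k), T μ :=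
    (Finset.sum_image hinj).symm
  have hle : ∑ μ ∈ (range s).image (fun k => b * (g : F) ^ k), T μ ≤ ∑ μ : F, T μ :=
    Finset.sum_le_sum_of_subset_of_nonneg (Finset.subset_univ _)
      (fun μ _ _ => sq_nonneg _)
  have htotal : ∑ μ : F, T μ = (Fintype.card F : ℝ) * s := meansq hψ g le_rfl
  have hfinal : (s : ℝ) * T b ≤ (Fintype.card F : ℝ) * s := by
    rw [hsmul, himg]; rw [htotal] at hle; exact hle
  have hs' : (0 : ℝ) < s := by exact_mod_cast hs
  have hTb : T b ≤ (Fintype.card F : ℝ) := by nlinarith [hfinal, hs']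
  exact hTb

/-- The key bound in the proof of Lemma 1:
`(1/q)·Σ_{μ ∈ F_q^×} |Σ_{x₁<s₁} ψ(a₁μg₁^{x₁})|²·|Σ_{x₂<s₂} ψ(a₂μg₂^{x₂})|²·|Σ_{x₃<r} ψ(a₃μg₃^{x₃})|² ≤ q²·r`. -/
theorem stmt_16 {F : Type*} [Field F] [Fintype F] [DecidableEq F] (ψ : AddChar F ℂ)
    (hψ : ∃ u : F, ψ u ≠ 1) (a₁ a₂ a₃ g₁ g₂ g₃ : Fˣ) (r : ℕ)
    (hr : 1 ≤ r) (hr3 : r ≤ orderOf g₃) :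
    (1 / (Fintype.card F : ℝ)) * ∑ μ : Fˣ,
        (‖∑ x ∈ range (orderOf g₁), ψ ((a₁ : F) * (μ : F) * (g₁ : F) ^ x)‖ ^ 2 *
          ‖∑ x ∈ range (orderOf g₂), ψ ((a₂ : F) * (μ : F) * (g₂ : F) ^ x)‖ ^ 2 *
          ‖∑ x ∈ range r, ψ ((a₃ : F) * (μ : F) * (g₃ : F) ^ x)‖ ^ 2) ≤
      (Fintype.card F : ℝ) ^ 2 * r := by
  classical
  have hψ' : ψ ≠ 1 := by
    intro h
    obtain ⟨u, hu⟩ := hψ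
    exact hu (by rw [h]; rfl)
  have hprim : ψ.IsPrimitive := AddChar.IsPrimitive.of_ne_one hψ'
  set q : ℝ := (Fintype.card F : ℝ) with hq_def
  have hq : (0 : ℝ) < q := by
    simp only [hq_def]
    exact_mod_cast Fintype.card_pos
  -- bound the third factor sum over units
  have hC : ∑ μ : Fˣ, ‖∑ x ∈ range r, ψ ((a₃ : F) * (μ : F) * (g₃ : F) ^ x)‖ ^ 2
      ≤ q * r := by
    have hinj : ∀ x ∈ (Finset.univ : Finset Fˣ), ∀ y ∈ (Finset.univ : Finset Fˣ),
        (a₃ : F) * (x : F) = (a₃ : F) * (y : F) → x = y := by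
      intro x _ y _ h
      exact Units.ext (mul_left_cancel₀ (Units.ne_zero a₃) h)
    have h1 : ∑ μ : Fˣ, ‖∑ x ∈ range r, ψ ((a₃ : F) * (μ : F) * (g₃ : F) ^ x)‖ ^ 2
        = ∑ μ ∈ (Finset.univ : Finset Fˣ).image (fun ν : Fˣ => (a₃ : F) * (ν : F)),
            ‖∑ x ∈ range r, ψ (μ * (g₃ : F) ^ x)‖ ^ 2 := by
      rw [Finset.sum_image hinj]
    rw [h1]
    calc ∑ μ ∈ (Finset.univ : Finset Fˣ).image (fun ν : Fˣ => (a₃ : F) * (ν : F)),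
          ‖∑ x ∈ range r, ψ (μ * (g₃ : F) ^ x)‖ ^ 2
        ≤ ∑ μ : F, ‖∑ x ∈ range r, ψ (μ * (g₃ : F) ^ x)‖ ^ 2 :=
          Finset.sum_le_sum_of_subset_of_nonneg (Finset.subset_univ _)
            (fun μ _ _ => sq_nonneg _)
      _ = q * r := meansq hprim g₃ hr3
  -- pointwise bounds for the first two factors
  have hterm : ∀ μ : Fˣ,
      ‖∑ x ∈ range (orderOf g₁), ψ ((a₁ : F) * (μ : F) * (g₁ : F) ^ x)‖ ^ 2 *
        ‖∑ x ∈ range (orderOf g₂), ψ ((a₂ : F) * (μ : F) * (g₂ : F) ^ x)‖ ^ 2 *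
        ‖∑ x ∈ range r, ψ ((a₃ : F) * (μ : F) * (g₃ : F) ^ x)‖ ^ 2
      ≤ q * q * ‖∑ x ∈ range r, ψ ((a₃ : F) * (μ : F) * (g₃ : F) ^ x)‖ ^ 2 := by
    intro μ
    have hb1 : (a₁ : F) * (μ : F) ≠ 0 := mul_ne_zero (Units.ne_zero a₁) (Units.ne_zero μ)
    have hb2 : (a₂ : F) * (μ : F) ≠ 0 := mul_ne_zero (Units.ne_zero a₂) (Units.ne_zero μ)
    have h1 := ptbound hprim g₁ hb1
    have h2 := ptbound hprim g₂ hb2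
    have hc3 : (0 : ℝ) ≤ ‖∑ x ∈ range r, ψ ((a₃ : F) * (μ : F) * (g₃ : F) ^ x)‖ ^ 2 :=
      sq_nonneg _
    gcongr <;> first | exact sq_nonneg _ | exact h1 | exact h2 | positivity
  have hsum : ∑ μ : Fˣ,
      (‖∑ x ∈ range (orderOf g₁), ψ ((a₁ : F) * (μ : F) * (g₁ : F) ^ x)‖ ^ 2 *
        ‖∑ x ∈ range (orderOf g₂), ψ ((a₂ : F) * (μ : F) * (g₂ : F) ^ x)‖ ^ 2 *
        ‖∑ x ∈ range r, ψ ((a₃ : F) * (μ : F) * (g₃ : F) ^ x)‖ ^ 2)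
      ≤ q * q * (q * r) := by
    have step1 := Finset.sum_le_sum (fun μ (_ : μ ∈ (Finset.univ : Finset Fˣ)) => hterm μ)
    refine le_trans step1 ?_
    rw [← Finset.mul_sum]
    have : (0:ℝ) ≤ q * q := by positivity
    exact mul_le_mul_of_nonneg_left hC this
  calc (1 / q) * ∑ μ : Fˣ,
        (‖∑ x ∈ range (orderOf g₁), ψ ((a₁ : F) * (μ : F) * (g₁ : F) ^ x)‖ ^ 2 *
          ‖∑ x ∈ range (orderOf g₂), ψ ((a₂ : F) * (μ : F) * (g₂ : F) ^ x)‖ ^ 2 *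
          ‖∑ x ∈ range r, ψ ((a₃ : F) * (μ : F) * (g₃ : F) ^ x)‖ ^ 2)
      ≤ (1 / q) * (q * q * (q * r)) := by
        apply mul_le_mul_of_nonneg_left hsum
        positivity
    _ = q ^ 2 * r := by field_simp
end
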